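/- Let λ > 0, x ∈ ℂ, and suppose H_0: [0,∞) → ℝ is of bounded variation and H_1,…,H_d are continuously differentiable with H_r'(t) = λ H_{r-1}(t) for 2 ≤ r ≤ d and H_1'(t) = λ H_0(t) for almost every t. Then for all t ≥ 0, ∑_{r=0}^{d} e^{-λ x t} x^r H_r(t) - ∑_{r=0}^{d} x^r H_r(0) = ∫_{(0,t]} e^{-λ x u} dH_0(u) - λ x^{d+1} ∫_0^t e^{-λ x u} H_d(u) du. -/

import Mathlib

open MeasureTheory

open MeasureTheory Set intervalIntegral

lemma hasDerivAt_cexp_real (c : ℂ) (u : ℝ) :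
    HasDerivAt (fun v : ℝ => Complex.exp (c * v)) (c * Complex.exp (c * u)) u := by
  have h : HasDerivAt (fun z : ℂ => Complex.exp (c * z)) (c * Complex.exp (c * u)) (u : ℂ) := by
    simpa [mul_comm, Function.comp_def] using
      ((Complex.hasDerivAt_exp (c * u)).comp (u : ℂ) ((hasDerivAt_id (u : ℂ)).const_mul c))
  simpa using h.comp_ofReal

lemma integral_cexp_sub (c : ℂ) (a b : ℝ) :
    ∫ s in a..b, c * Complex.exp (c * s) = Complex.exp (c * b) - Complex.exp (c * a) :=
  integral_eq_sub_of_hasDerivAt (fun u _ => hasDerivAt_cexp_real c u)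
    ((Continuous.intervalIntegrable (by continuity) a b))

lemma stieltjes_exp_integral (c : ℂ) (g : StieltjesFunction ℝ) (t : ℝ) (ht : 0 ≤ t) :
    ∫ u in Set.Ioc (0:ℝ) t, Complex.exp (c * u) ∂g.measure
      = Complex.exp (c * t) * ((g t : ℂ) - (g 0 : ℂ))
        - c * ∫ u in (0:ℝ)..t, Complex.exp (c * u) * ((g u : ℂ) - (g 0 : ℂ)) := by
  set μ := g.measure.restrict (Set.Ioc (0:ℝ) t) with hμ
  set ν := (volume : Measure ℝ).restrict (Set.Ioc (0:ℝ) t) with hν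
  haveI : IsFiniteMeasure μ := by
    constructor
    rw [hμ, Measure.restrict_apply_univ, g.measure_Ioc]
    exact ENNReal.ofReal_lt_top
  haveI : IsFiniteMeasure ν := by
    constructor
    rw [hν, Measure.restrict_apply_univ, Real.volume_Ioc]
    exact ENNReal.ofReal_lt_top
  set F : ℝ → ℝ → ℂ :=
    fun u s => Set.indicator {p : ℝ × ℝ | p.1 ≤ p.2} (fun p => c * Complex.exp (c * p.2)) (u, s)
    with hF
  -- integrability of the uncurried function
  have hmeas : AEStronglyMeasurable (Function.uncurry F) (μ.prod ν) := by
    apply StronglyMeasurable.aestronglyMeasurable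
    apply StronglyMeasurable.indicator
    · exact (Continuous.stronglyMeasurable (by continuity))
    · exact measurableSet_le measurable_fst measurable_snd
  have hsnd : ∀ᵐ p : ℝ × ℝ ∂(μ.prod ν), p.2 ∈ Set.Ioc (0:ℝ) t := by
    rw [ae_iff]
    have : {p : ℝ × ℝ | ¬ p.2 ∈ Set.Ioc (0:ℝ) t} = Set.univ ×ˢ (Set.Ioc (0:ℝ) t)ᶜ := by
      ext p; simp
    rw [this, Measure.prod_prod]
    have : ν ((Set.Ioc (0:ℝ) t)ᶜ) = 0 := by
      simp [hν, Measure.restrict_apply measurableSet_Ioc.compl]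
    rw [this, mul_zero]
  have hint : Integrable (Function.uncurry F) (μ.prod ν) := by
    refine Integrable.mono' (integrable_const (‖c‖ * Real.exp (|c.re| * t))) hmeas ?_
    filter_upwards [hsnd] with p hp
    have h1 : Function.uncurry F p
        = Set.indicator {q : ℝ × ℝ | q.1 ≤ q.2} (fun q => c * Complex.exp (c * q.2)) p := by
      simp [hF, Function.uncurry]
    rw [h1]
    refine (norm_indicator_le_norm_self _ _).trans ?_
    rw [norm_mul]
    refine mul_le_mul_of_nonneg_left ?_ (norm_nonneg c)
    rw [Complex.norm_exp]
    apply Real.exp_le_exp.2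
    have : (c * (p.2 : ℂ)).re = c.re * p.2 := by
      simp [Complex.mul_re]
    rw [this]
    calc c.re * p.2 ≤ |c.re| * p.2 := mul_le_mul_of_nonneg_right (le_abs_self _) hp.1.le
    _ ≤ |c.re| * t := mul_le_mul_of_nonneg_left hp.2 (abs_nonneg _)
  have swap := integral_integral_swap hint
  -- compute the left side of swap
  have lhs_eq : ∫ u, ∫ s, F u s ∂ν ∂μ
      = ∫ u in Set.Ioc (0:ℝ) t, (Complex.exp (c * t) - Complex.exp (c * u)) ∂g.measure := by
    rw [← hμ]
    apply MeasureTheory.integral_congr_ae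
    filter_upwards [ae_restrict_mem (measurableSet_Ioc : MeasurableSet (Set.Ioc (0:ℝ) t))]
      with u hu
    have hFu : ∀ s, F u s = Set.indicator (Set.Ici u) (fun s => c * Complex.exp (c * s)) s := by
      intro s; simp [hF, Set.indicator_apply, Set.mem_Ici]
    simp only [hFu]
    rw [hν, MeasureTheory.integral_indicator measurableSet_Ici, Measure.restrict_restrict measurableSet_Ici]
    have hset : Set.Ici u ∩ Set.Ioc 0 t = Set.Icc u t := by
      ext s
      simp only [Set.mem_inter_iff, Set.mem_Ici, Set.mem_Ioc, Set.mem_Icc]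
      constructor
      · rintro ⟨h1, _, h3⟩; exact ⟨h1, h3⟩
      · rintro ⟨h1, h2⟩; exact ⟨h1, lt_of_lt_of_le hu.1 h1, h2⟩
    rw [hset, integral_Icc_eq_integral_Ioc, ← intervalIntegral.integral_of_le hu.2]
    exact integral_cexp_sub c u t
  -- compute the right side of swap
  have rhs_eq : ∫ s, ∫ u, F u s ∂μ ∂ν
      = ∫ s in (0:ℝ)..t, ((g s : ℂ) - (g 0 : ℂ)) * (c * Complex.exp (c * s)) := by
    rw [intervalIntegral.integral_of_le ht, ← hν]
    apply MeasureTheory.integral_congr_ae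
    filter_upwards [ae_restrict_mem (measurableSet_Ioc : MeasurableSet (Set.Ioc (0:ℝ) t))]
      with s hs
    have hFs : ∀ u, F u s = Set.indicator (Set.Iic s) (fun _ => c * Complex.exp (c * s)) u := by
      intro u; simp [hF, Set.indicator_apply, Set.mem_Iic]
    simp only [hFs]
    rw [hμ, integral_indicator_const _ measurableSet_Iic, measureReal_def,
      Measure.restrict_apply measurableSet_Iic]
    have hset : Set.Iic s ∩ Set.Ioc 0 t = Set.Ioc 0 s := by
      ext u
      simp only [Set.mem_inter_iff, Set.mem_Iic, Set.mem_Ioc]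
      constructor
      · rintro ⟨h1, h2, _⟩; exact ⟨h2, h1⟩
      · rintro ⟨h1, h2⟩; exact ⟨h2, h1, h2.trans hs.2⟩
    rw [hset, g.measure_Ioc]
    have hg0 : g 0 ≤ g s := g.mono hs.1.le
    rw [ENNReal.toReal_ofReal (by linarith)]
    rw [Complex.real_smul]
    push_cast
    ring
  rw [lhs_eq, rhs_eq] at swap
  -- deduce the result
  have hexp_int : IntegrableOn (fun u : ℝ => Complex.exp (c * u)) (Set.Ioc 0 t) g.measure := by
    have hc : Continuous fun u : ℝ => Complex.exp (c * u) := by continuity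
    exact hc.integrableOn_Ioc
  have hsub : ∫ u in Set.Ioc (0:ℝ) t, (Complex.exp (c * t) - Complex.exp (c * u)) ∂g.measure
      = Complex.exp (c * t) * ((g t : ℂ) - (g 0 : ℂ))
        - ∫ u in Set.Ioc (0:ℝ) t, Complex.exp (c * u) ∂g.measure := by
    rw [integral_sub (integrable_const _) hexp_int]
    congr 1
    rw [setIntegral_const, measureReal_def, g.measure_Ioc]
    have hg0 : g 0 ≤ g t := g.mono ht
    rw [ENNReal.toReal_ofReal (by linarith), Complex.real_smul]
    push_cast
    ring
  rw [hsub] at swap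
  have : c * ∫ u in (0:ℝ)..t, Complex.exp (c * u) * ((g u : ℂ) - (g 0 : ℂ))
      = ∫ s in (0:ℝ)..t, ((g s : ℂ) - (g 0 : ℂ)) * (c * Complex.exp (c * s)) := by
    rw [← intervalIntegral.integral_const_mul]
    apply intervalIntegral.integral_congr
    intro s _
    ring
  rw [this]
  linear_combination -swap

lemma exp_mul_hasDerivAt (c : ℂ) {f : ℝ → ℝ} {f' : ℝ} {u : ℝ} (hf : HasDerivAt f f' u) :
    HasDerivAt (fun v : ℝ => Complex.exp (c * v) * (f v : ℂ))
      (Complex.exp (c * u) * (f' : ℂ) + c * Complex.exp (c * u) * (f u : ℂ)) u := by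
  have := (hasDerivAt_cexp_real c u).mul hf.ofReal_comp
  exact this.congr_deriv (by ring)

/-- Partial-integration / ODE identity (equation (AB-Wx-def)): if `H_0 = g - h` is of
bounded variation (difference of two Stieltjes functions), `H_1,…,H_d` are continuously
differentiable with `H_r' = λ H_{r-1}` (`r ≥ 2`) and `H_1' = λ H_0` a.e., then
`∑_r e^{-λxt} x^r H_r(t) - ∑_r x^r H_r(0)
   = ∫_{(0,t]} e^{-λxu} dH_0(u) - λ x^{d+1} ∫₀^t e^{-λxu} H_d(u) du`. -/
theorem partial_integration_identity (d : ℕ) (hd : 1 ≤ d) (lam : ℝ) (hlam : 0 < lam)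
    (x : ℂ) (g h : StieltjesFunction ℝ) (H : ℕ → ℝ → ℝ)
    (hH0 : ∀ u, H 0 u = g u - h u)
    (hH1diff : Differentiable ℝ (H 1))
    (hH1' : ∀ᵐ u : ℝ, deriv (H 1) u = lam * H 0 u)
    (hHr : ∀ r, 2 ≤ r → r ≤ d → ∀ u, HasDerivAt (H r) (lam * H (r - 1) u) u)
    (hHcont : ∀ r, 1 ≤ r → r ≤ d → Continuous (H r))
    (t : ℝ) (ht : 0 ≤ t) :
    (∑ r ∈ Finset.range (d + 1), Complex.exp (-(lam : ℂ) * x * (t : ℂ)) * x ^ r * (H r t : ℂ))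
      - ∑ r ∈ Finset.range (d + 1), x ^ r * (H r 0 : ℂ)
    = ((∫ u in Set.Ioc (0 : ℝ) t, Complex.exp (-(lam : ℂ) * x * (u : ℂ)) ∂g.measure)
        - ∫ u in Set.Ioc (0 : ℝ) t, Complex.exp (-(lam : ℂ) * x * (u : ℂ)) ∂h.measure)
      - (lam : ℂ) * x ^ (d + 1) *
          ∫ u in (0 : ℝ)..t, Complex.exp (-(lam : ℂ) * x * (u : ℂ)) * (H d u : ℂ) := by
  set c : ℂ := -(lam : ℂ) * x with hc
  have hEc : Continuous fun u : ℝ => Complex.exp (c * u) := by continuity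
  -- interval integrability helper
  have hIntE : ∀ f : ℝ → ℝ, IntervalIntegrable f volume 0 t →
      IntervalIntegrable (fun u => Complex.exp (c * u) * (f u : ℂ)) volume 0 t := by
    intro f hf
    have h1 : IntervalIntegrable (fun u => ((f u : ℝ) : ℂ)) volume 0 t :=
      ⟨Complex.ofRealCLM.integrable_comp hf.1, Complex.ofRealCLM.integrable_comp hf.2⟩
    exact h1.continuousOn_mul hEc.continuousOn
  have hH0m : IntervalIntegrable (H 0) volume 0 t := by
    have he : H 0 = fun u => (g u : ℝ) - h u := funext hH0
    rw [he]
    exact (g.mono.intervalIntegrable).sub (h.mono.intervalIntegrable)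
  set I : ℕ → ℂ := fun r => ∫ u in (0:ℝ)..t, Complex.exp (c * u) * (H r u : ℂ) with hI
  -- key identity for 1 ≤ r ≤ d
  have key : ∀ r, 1 ≤ r → r ≤ d →
      Complex.exp (c * t) * (H r t : ℂ) - (H r 0 : ℂ)
        = (lam : ℂ) * I (r - 1) + c * I r := by
    intro r hr1 hrd
    have hcr : Continuous (H r) := hHcont r hr1 hrd
    have hIr : IntervalIntegrable (fun u => Complex.exp (c * u) * (H r u : ℂ)) volume 0 t :=
      hIntE _ (hcr.intervalIntegrable 0 t)
    rcases eq_or_lt_of_le hr1 with h1 | h2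
    · -- r = 1
      obtain rfl : r = 1 := h1.symm
      have hder : ∀ u : ℝ, HasDerivAt (fun v : ℝ => Complex.exp (c * v) * (H 1 v : ℂ))
          (Complex.exp (c * u) * ((deriv (H 1) u : ℝ) : ℂ)
            + c * Complex.exp (c * u) * (H 1 u : ℂ)) u :=
        fun u => exp_mul_hasDerivAt c ((hH1diff u).hasDerivAt)
      have hae : (fun u : ℝ => Complex.exp (c * u) * ((deriv (H 1) u : ℝ) : ℂ)
            + c * Complex.exp (c * u) * (H 1 u : ℂ))
          =ᵐ[volume] (fun u : ℝ => (lam : ℂ) * (Complex.exp (c * u) * (H 0 u : ℂ))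
            + c * (Complex.exp (c * u) * (H 1 u : ℂ))) := by
        filter_upwards [hH1'] with u hu
        rw [hu]
        push_cast
        ring
      have hψint : IntervalIntegrable (fun u : ℝ =>
          (lam : ℂ) * (Complex.exp (c * u) * (H 0 u : ℂ))
            + c * (Complex.exp (c * u) * (H 1 u : ℂ))) volume 0 t :=
        ((hIntE _ hH0m).const_mul _).add (hIr.const_mul c)
      have hφint : IntervalIntegrable (fun u : ℝ =>
          Complex.exp (c * u) * ((deriv (H 1) u : ℝ) : ℂ)
            + c * Complex.exp (c * u) * (H 1 u : ℂ)) volume 0 t :=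
        hψint.congr_ae (MeasureTheory.ae_restrict_of_ae hae.symm)
      have hFTC := intervalIntegral.integral_eq_sub_of_hasDerivAt
        (f := fun v : ℝ => Complex.exp (c * v) * (H 1 v : ℂ)) (fun u _ => hder u) hφint
      have hcong : (∫ u in (0:ℝ)..t, (Complex.exp (c * u) * ((deriv (H 1) u : ℝ) : ℂ)
            + c * Complex.exp (c * u) * (H 1 u : ℂ)))
          = ∫ u in (0:ℝ)..t, ((lam : ℂ) * (Complex.exp (c * u) * (H 0 u : ℂ))
            + c * (Complex.exp (c * u) * (H 1 u : ℂ))) := by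
        apply intervalIntegral.integral_congr_ae
        filter_upwards [hae] with u hu _
        exact hu
      rw [hcong] at hFTC
      rw [intervalIntegral.integral_add ((hIntE _ hH0m).const_mul _) (hIr.const_mul c),
        intervalIntegral.integral_const_mul, intervalIntegral.integral_const_mul] at hFTC
      simp only [Complex.ofReal_zero, mul_zero, Complex.exp_zero, one_mul] at hFTC
      simpa [hI] using hFTC.symm
    · -- 2 ≤ r
      have h2' : 2 ≤ r := h2
      have hcp : Continuous (H (r - 1)) := hHcont (r - 1) (by omega) (by omega)
      have hder : ∀ u : ℝ, HasDerivAt (fun v : ℝ => Complex.exp (c * v) * (H r v : ℂ))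
          ((lam : ℂ) * (Complex.exp (c * u) * (H (r - 1) u : ℂ))
            + c * (Complex.exp (c * u) * (H r u : ℂ))) u := by
        intro u
        have := exp_mul_hasDerivAt c (hHr r h2' hrd u)
        convert this using 1
        push_cast
        ring
      have hint : IntervalIntegrable (fun u : ℝ =>
          (lam : ℂ) * (Complex.exp (c * u) * (H (r - 1) u : ℂ))
            + c * (Complex.exp (c * u) * (H r u : ℂ))) volume 0 t :=
        ((hIntE _ (hcp.intervalIntegrable 0 t)).const_mul _).add (hIr.const_mul c)
      have hFTC := intervalIntegral.integral_eq_sub_of_hasDerivAt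
        (f := fun v : ℝ => Complex.exp (c * v) * (H r v : ℂ)) (fun u _ => hder u) hint
      rw [intervalIntegral.integral_add ((hIntE _ (hcp.intervalIntegrable 0 t)).const_mul _)
          (hIr.const_mul c),
        intervalIntegral.integral_const_mul, intervalIntegral.integral_const_mul] at hFTC
      simp only [Complex.ofReal_zero, mul_zero, Complex.exp_zero, one_mul] at hFTC
      simpa [hI] using hFTC.symm
  -- key identity for r = 0 (Stieltjes part)
  have Sg := stieltjes_exp_integral c g t ht
  have Sh := stieltjes_exp_integral c h t ht
  have hgi : IntervalIntegrable (fun u => Complex.exp (c * u) * ((g u : ℂ) - (g 0 : ℂ)))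
      volume 0 t := by
    have h1 : IntervalIntegrable (fun u => (g u : ℝ) - g 0) volume 0 t :=
      (g.mono.intervalIntegrable).sub intervalIntegrable_const
    simpa using hIntE _ h1
  have hhi : IntervalIntegrable (fun u => Complex.exp (c * u) * ((h u : ℂ) - (h 0 : ℂ)))
      volume 0 t := by
    have h1 : IntervalIntegrable (fun u => (h u : ℝ) - h 0) volume 0 t :=
      (h.mono.intervalIntegrable).sub intervalIntegrable_const
    simpa using hIntE _ h1
  have hsub1 : (∫ u in (0:ℝ)..t, Complex.exp (c * u) * ((g u : ℂ) - (g 0 : ℂ)))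
      - ∫ u in (0:ℝ)..t, Complex.exp (c * u) * ((h u : ℂ) - (h 0 : ℂ))
      = ∫ u in (0:ℝ)..t, Complex.exp (c * u) * ((H 0 u : ℂ) - (H 0 0 : ℂ)) := by
    rw [← intervalIntegral.integral_sub hgi hhi]
    apply intervalIntegral.integral_congr
    intro u _
    simp only [hH0]
    push_cast
    ring
  have hsub2 : (∫ u in (0:ℝ)..t, Complex.exp (c * u) * ((H 0 u : ℂ) - (H 0 0 : ℂ)))
      = I 0 - (H 0 0 : ℂ) * ∫ u in (0:ℝ)..t, Complex.exp (c * u) := by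
    have h1 : IntervalIntegrable (fun u => Complex.exp (c * u) * ((H 0 0 : ℝ) : ℂ))
        volume 0 t := hIntE _ intervalIntegrable_const
    have : (fun u : ℝ => Complex.exp (c * u) * ((H 0 u : ℂ) - (H 0 0 : ℂ)))
        = fun u : ℝ => Complex.exp (c * u) * (H 0 u : ℂ)
          - Complex.exp (c * u) * ((H 0 0 : ℝ) : ℂ) := by
      funext u; ring
    rw [this, intervalIntegral.integral_sub (hIntE _ hH0m) h1,
      intervalIntegral.integral_mul_const]
    rw [hI]
    ring
  have hexpint : c * (∫ u in (0:ℝ)..t, Complex.exp (c * u)) = Complex.exp (c * t) - 1 := by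
    rw [← intervalIntegral.integral_const_mul]
    have := integral_cexp_sub c 0 t
    simpa using this
  have key0 : Complex.exp (c * t) * (H 0 t : ℂ) - (H 0 0 : ℂ)
      = ((∫ u in Set.Ioc (0:ℝ) t, Complex.exp (c * u) ∂g.measure)
          - ∫ u in Set.Ioc (0:ℝ) t, Complex.exp (c * u) ∂h.measure) + c * I 0 := by
    have e1 : ((H 0 t : ℝ) : ℂ) = (g t : ℂ) - (h t : ℂ) := by rw [hH0 t]; push_cast; ring
    have e2 : ((H 0 0 : ℝ) : ℂ) = (g 0 : ℂ) - (h 0 : ℂ) := by rw [hH0 0]; push_cast; ring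
    linear_combination (-1 : ℂ) * Sg + Sh + Complex.exp (c * (t : ℂ)) * e1 + c * hsub1
      + c * hsub2 - ((H 0 0 : ℝ) : ℂ) * hexpint - Complex.exp (c * (t : ℂ)) * e2
  -- assemble
  rw [← Finset.sum_sub_distrib]
  have hsplit := Finset.sum_range_succ' (fun r : ℕ =>
    Complex.exp (c * t) * x ^ r * (H r t : ℂ) - x ^ r * (H r 0 : ℂ)) d
  rw [hsplit]
  have hterm : ∀ i ∈ Finset.range d,
      Complex.exp (c * t) * x ^ (i + 1) * (H (i + 1) t : ℂ) - x ^ (i + 1) * (H (i + 1) 0 : ℂ)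
        = (fun i : ℕ => (lam : ℂ) * x ^ (i + 1) * I i) i
          - (fun i : ℕ => (lam : ℂ) * x ^ (i + 1) * I i) (i + 1) := by
    intro i hi
    have hk := key (i + 1) (by omega) (by have := Finset.mem_range.1 hi; omega)
    simp only [Nat.add_sub_cancel] at hk
    simp only []
    rw [hc] at hk ⊢
    linear_combination x ^ (i + 1) * hk
  rw [Finset.sum_congr rfl hterm, Finset.sum_range_sub']
  simp only [pow_zero, one_mul, pow_one]
  rw [hc] at key0 ⊢
  linear_combination key0
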